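/- Assume μ satisfies Assumption (A) and that Ω⁻ is nonempty, and let ρ = ρ(Ω⁻) be the inradius of Ω⁻. Then almost surely liminf_{n→∞} ρ_n ≥ ρ. -/

import Mathlib

open MeasureTheory ProbabilityTheory Filter Metric
open Topology

/-- Logarithmic potential of a measure on ℂ. -/
noncomputable def logPot (μ : Measure ℂ) (z : ℂ) : ℝ :=
  ∫ w, Real.log (‖z - w‖) ∂μ

/-- Topological support of a measure on ℂ. -/
def msupport (μ : Measure ℂ) : Set ℂ :=
  {x : ℂ | ∀ U ∈ nhds x, 0 < μ U}

/-- Assumption (A): for every compact `K`, `sup_{z ∈ K} ∫ (log|z-w|)² dμ(w) < ∞`. -/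
def AssumptionA (μ : Measure ℂ) : Prop :=
  ∀ K : Set ℂ, IsCompact K → ∃ C : ℝ, ∀ z ∈ K,
    ∫⁻ w, ENNReal.ofReal ((Real.log (‖z - w‖)) ^ 2) ∂μ ≤ ENNReal.ofReal C

/-- Assumption (D): `μ(B(z,r)) ≤ C rᵉ` for all `z` and `r > 0`. -/
def AssumptionD (μ : Measure ℂ) : Prop :=
  ∃ C : ℝ, ∃ ε : ℝ, 0 < ε ∧ ∀ z : ℂ, ∀ r : ℝ, 0 < r →
    μ (Metric.ball z r) ≤ ENNReal.ofReal (C * r ^ ε)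

/-- The filled unit lemniscate of `p_n(z) = ∏_{k<n} (z - X k ω)`. -/
def lemniscate {Ω : Type*} (X : ℕ → Ω → ℂ) (n : ℕ) (ω : Ω) : Set ℂ :=
  {z : ℂ | ‖∏ k ∈ Finset.range n, (z - X k ω)‖ < 1}

/-- Inradius of a planar set: the sup of radii of open disks contained in it (0 if none). -/
noncomputable def inradius (U : Set ℂ) : ℝ :=
  sSup {r : ℝ | 0 < r ∧ ∃ c : ℂ, Metric.ball c r ⊆ U}

namespace St3

/-! ### Truncated logarithmic kernel -/

/-- Truncated kernel `log (max |z-w| e^{-M})`. -/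
noncomputable def fM (M : ℝ) (z w : ℂ) : ℝ :=
  Real.log (max (‖z - w‖) (Real.exp (-M)))

/-- Truncated potential. -/
noncomputable def FM (μ : Measure ℂ) (M : ℝ) (z : ℂ) : ℝ :=
  ∫ w, fM M z w ∂μ

lemma fM_arg_pos (M : ℝ) (z w : ℂ) : 0 < max (‖z - w‖) (Real.exp (-M)) :=
  lt_max_of_lt_right (Real.exp_pos _)

lemma neg_le_fM (M : ℝ) (z w : ℂ) : -M ≤ fM M z w := by
  have h := Real.log_le_log (Real.exp_pos (-M)) (le_max_right (‖z - w‖) _)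
  rw [Real.log_exp] at h
  exact h

lemma fM_le_max (M : ℝ) (z w : ℂ) :
    fM M z w ≤ max (Real.log (‖z - w‖)) (-M) := by
  rcases le_total (‖z - w‖) (Real.exp (-M)) with h | h
  · rw [fM, max_eq_right h, Real.log_exp]
    exact le_max_right _ _
  · rw [fM, max_eq_left h]
    exact le_max_left _ _

lemma fM_anti {M M' : ℝ} (h : M ≤ M') (z w : ℂ) : fM M' z w ≤ fM M z w := by
  refine Real.log_le_log (fM_arg_pos _ _ _) ?_
  exact max_le_max le_rfl (Real.exp_le_exp.2 (neg_le_neg h))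

/-- Lipschitz-type estimate for `log ∘ max · c`. -/
lemma log_max_lip {a b c : ℝ} (hc : 0 < c) :
    |Real.log (max a c) - Real.log (max b c)| ≤ |a - b| / c := by
  have key : ∀ x y : ℝ, c ≤ x → c ≤ y → x ≤ y →
      Real.log y - Real.log x ≤ (y - x) / c := by
    intro x y hx hy hxy
    have hx0 : 0 < x := hc.trans_le hx
    have hy0 : 0 < y := hc.trans_le hy
    have h1 : Real.log y - Real.log x = Real.log (y / x) := (Real.log_div hy0.ne' hx0.ne').symm
    rw [h1]
    have h2 : Real.log (y / x) ≤ y / x - 1 := Real.log_le_sub_one_of_pos (div_pos hy0 hx0)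
    have h3 : y / x - 1 = (y - x) / x := by field_simp
    have h4 : (y - x) / x ≤ (y - x) / c :=
      div_le_div_of_nonneg_left (by linarith) hc hx
    linarith
  have hmax : |max a c - max b c| ≤ |a - b| := abs_max_sub_max_le_abs a b c
  rcases le_total (max a c) (max b c) with h | h
  · have := key _ _ (le_max_right a c) (le_max_right b c) h
    rw [abs_sub_comm, abs_of_nonneg (by linarith [Real.log_le_log (hc.trans_le (le_max_right a c)) h] : (0:ℝ) ≤ Real.log (max b c) - Real.log (max a c))]
    calc Real.log (max b c) - Real.log (max a c) ≤ (max b c - max a c) / c := this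
      _ ≤ |a - b| / c := by
          apply div_le_div_of_nonneg_right ?_ hc.le
          calc max b c - max a c ≤ |max b c - max a c| := le_abs_self _
            _ = |max a c - max b c| := abs_sub_comm _ _
            _ ≤ |a - b| := hmax
  · have := key _ _ (le_max_right b c) (le_max_right a c) h
    rw [abs_of_nonneg (by linarith [Real.log_le_log (hc.trans_le (le_max_right b c)) h] : (0:ℝ) ≤ Real.log (max a c) - Real.log (max b c))]
    calc Real.log (max a c) - Real.log (max b c) ≤ (max a c - max b c) / c := this
      _ ≤ |a - b| / c := by
          apply div_le_div_of_nonneg_right ?_ hc.le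
          calc max a c - max b c ≤ |max a c - max b c| := le_abs_self _
            _ ≤ |a - b| := hmax

/-- Lipschitz continuity of `fM` in `z`. -/
lemma fM_lip (M : ℝ) (z z' w : ℂ) :
    |fM M z w - fM M z' w| ≤ Real.exp M * ‖z - z'‖ := by
  have h1 : |fM M z w - fM M z' w| ≤
      |‖z - w‖ - ‖z' - w‖| / Real.exp (-M) :=
    log_max_lip (Real.exp_pos _)
  have h2 : |‖z - w‖ - ‖z' - w‖| ≤ ‖z - z'‖ := by
    have := abs_norm_sub_norm_le (z - w) (z' - w)
    simpa [sub_sub_sub_cancel_right] using this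
  calc |fM M z w - fM M z' w| ≤ |‖z - w‖ - ‖z' - w‖| / Real.exp (-M) := h1
    _ ≤ ‖z - z'‖ / Real.exp (-M) :=
        div_le_div_of_nonneg_right h2 (Real.exp_pos _).le
    _ = Real.exp M * ‖z - z'‖ := by
        rw [div_eq_mul_inv, ← Real.exp_neg, neg_neg, mul_comm]

lemma fM_continuous (M : ℝ) (z : ℂ) : Continuous (fun w => fM M z w) := by
  have h1 : Continuous fun w : ℂ => max (‖z - w‖) (Real.exp (-M)) :=
    (continuous_norm.comp (continuous_const.sub continuous_id)).max continuous_const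
  exact h1.log fun w => (fM_arg_pos M z w).ne'

lemma fM_abs_le {M R : ℝ} (hM : 0 ≤ M) (hR : 0 ≤ R) {z w : ℂ}
    (hw : ‖w‖ ≤ R) :
    |fM M z w| ≤ max M (Real.log (‖z‖ + R + 1)) := by
  have hT : (1:ℝ) ≤ ‖z‖ + R + 1 := by
    have := norm_nonneg z
    linarith
  have hub : max (‖z - w‖) (Real.exp (-M)) ≤ ‖z‖ + R + 1 := by
    refine max_le ?_ ?_
    · calc ‖z - w‖ ≤ ‖z‖ + ‖w‖ := norm_sub_le z w
        _ ≤ ‖z‖ + R + 1 := by linarith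
    · calc Real.exp (-M) ≤ 1 := Real.exp_le_one_iff.2 (by linarith)
        _ ≤ _ := hT
  rw [abs_le]
  constructor
  · have := neg_le_fM M z w
    have : -max M (Real.log (‖z‖ + R + 1)) ≤ -M := neg_le_neg (le_max_left _ _)
    linarith [neg_le_fM M z w]
  · calc fM M z w ≤ Real.log (‖z‖ + R + 1) :=
        Real.log_le_log (fM_arg_pos M z w) hub
      _ ≤ max M _ := le_max_right _ _

/-- Product of moduli is bounded by exponential of sum of truncated kernels. -/
lemma prod_le_exp_sum (M : ℝ) (z : ℂ) (n : ℕ) (x : ℕ → ℂ) :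
    ‖∏ k ∈ Finset.range n, (z - x k)‖ ≤
      Real.exp (∑ k ∈ Finset.range n, fM M z (x k)) := by
  rw [Complex.norm_prod, Real.exp_sum]
  refine Finset.prod_le_prod (fun k _ => norm_nonneg _) fun k _ => ?_
  rw [fM, Real.exp_log (fM_arg_pos M z (x k))]
  exact le_max_left _ _

/-! ### Integrability facts -/

variable {μ : Measure ℂ} [IsProbabilityMeasure μ]

lemma measurable_logabs (z : ℂ) :
    Measurable (fun w : ℂ => Real.log (‖z - w‖)) :=
  Real.measurable_log.comp ((continuous_norm.comp
    (continuous_const.sub continuous_id)).measurable)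

lemma sq_abs_bound (x : ℝ) : |x| ≤ x ^ 2 + 1 := by nlinarith [sq_nonneg (|x| - 1), sq_abs x]

/-- Assumption (A) implies integrability of `log |z - ·|`. -/
lemma integrable_log_of_A (hA : AssumptionA μ) (z : ℂ) :
    Integrable (fun w => Real.log (‖z - w‖)) μ := by
  obtain ⟨C, hC⟩ := hA {z} isCompact_singleton
  have hCz := hC z rfl
  refine ⟨(measurable_logabs z).aestronglyMeasurable, ?_⟩
  rw [hasFiniteIntegral_iff_norm]
  calc ∫⁻ w, ENNReal.ofReal ‖Real.log (‖z - w‖)‖ ∂μ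
      ≤ ∫⁻ w, (ENNReal.ofReal ((Real.log (‖z - w‖)) ^ 2) + 1) ∂μ := by
        refine lintegral_mono fun w => ?_
        rw [Real.norm_eq_abs]
        calc ENNReal.ofReal |Real.log (‖z - w‖)|
            ≤ ENNReal.ofReal ((Real.log (‖z - w‖)) ^ 2 + 1) :=
              ENNReal.ofReal_le_ofReal (sq_abs_bound _)
          _ ≤ _ := by
              rw [ENNReal.ofReal_add (sq_nonneg _) zero_le_one]
              simp
    _ = (∫⁻ w, ENNReal.ofReal ((Real.log (‖z - w‖)) ^ 2) ∂μ) + 1 := by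
        rw [lintegral_add_right _ measurable_const, lintegral_one, measure_univ]
    _ ≤ ENNReal.ofReal C + 1 := by gcongr
    _ < ⊤ := by finiteness

lemma integrable_fM {R : ℝ} (hae : ∀ᵐ w ∂μ, ‖w‖ ≤ R) {M : ℝ} (hM : 0 ≤ M)
    (hR : 0 ≤ R) (z : ℂ) : Integrable (fun w => fM M z w) μ := by
  refine Integrable.mono' (integrable_const (max M (Real.log (‖z‖ + R + 1))))
    ((fM_continuous M z).aestronglyMeasurable) ?_
  filter_upwards [hae] with w hw
  simpa using fM_abs_le hM hR hw

/-- `FM` is antitone in `M`. -/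
lemma FM_anti {R : ℝ} (hae : ∀ᵐ w ∂μ, ‖w‖ ≤ R) (hR : 0 ≤ R)
    {M M' : ℝ} (hM : 0 ≤ M) (h : M ≤ M') (z : ℂ) : FM μ M' z ≤ FM μ M z :=
  integral_mono (integrable_fM hae (hM.trans h) hR z) (integrable_fM hae hM hR z)
    (fun w => fM_anti h z w)

/-- `FM μ M` is continuous in `z`. -/
lemma FM_continuous {R : ℝ} (hae : ∀ᵐ w ∂μ, ‖w‖ ≤ R) {M : ℝ} (hM : 0 ≤ M)
    (hR : 0 ≤ R) : Continuous (FM μ M) := by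
  have hlip : LipschitzWith (Real.exp M).toNNReal (FM μ M) := by
    refine LipschitzWith.of_dist_le_mul fun z z' => ?_
    have h1 : FM μ M z - FM μ M z' = ∫ w, (fM M z w - fM M z' w) ∂μ :=
      (integral_sub (integrable_fM hae hM hR z) (integrable_fM hae hM hR z')).symm
    have h2 : |∫ w, (fM M z w - fM M z' w) ∂μ| ≤ ∫ w, |fM M z w - fM M z' w| ∂μ := by
      simpa [Real.norm_eq_abs] using
        norm_integral_le_integral_norm (μ := μ) (fun w => fM M z w - fM M z' w)
    have h3 : ∫ w, |fM M z w - fM M z' w| ∂μ ≤ ∫ _w, Real.exp M * ‖z - z'‖ ∂μ := by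
      refine integral_mono ((integrable_fM hae hM hR z).sub (integrable_fM hae hM hR z')).abs
        (integrable_const _) fun w => fM_lip M z z' w
    rw [Real.dist_eq, Complex.dist_eq]
    rw [integral_const, probReal_univ] at h3
    simp only [ENNReal.toReal_one, one_smul] at h3
    calc |FM μ M z - FM μ M z'| = |∫ w, (fM M z w - fM M z' w) ∂μ| := by rw [h1]
      _ ≤ ∫ w, |fM M z w - fM M z' w| ∂μ := h2
      _ ≤ Real.exp M * ‖z - z'‖ := h3
      _ = (Real.exp M).toNNReal * ‖z - z'‖ := by
          rw [Real.coe_toNNReal _ (Real.exp_pos M).le]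
  exact hlip.continuous

/-- Pointwise: if `logPot μ z < 0` then some truncated potential is negative. -/
lemma exists_M_neg {R : ℝ} (hae : ∀ᵐ w ∂μ, ‖w‖ ≤ R) (hR : 0 ≤ R)
    (z : ℂ) (hint : Integrable (fun w => Real.log (‖z - w‖)) μ)
    (hz : logPot μ z < 0) : ∃ M : ℝ, 0 ≤ M ∧ FM μ M z < 0 := by
  set g : ℂ → ℝ := fun w => Real.log (‖z - w‖) with hg
  set h : ℕ → ℂ → ℝ := fun n w => max (g w) (-(n : ℝ)) with hh
  have hint_h : ∀ n : ℕ, Integrable (h n) μ := by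
    intro n
    refine Integrable.mono' (hint.abs.add (integrable_const (n : ℝ)))
      (((measurable_logabs z).max measurable_const).aestronglyMeasurable) ?_
    refine Eventually.of_forall fun w => ?_
    rw [Real.norm_eq_abs]
    show |max (g w) (-(n:ℝ))| ≤ |g w| + (n:ℝ)
    have hn : (0:ℝ) ≤ (n:ℝ) := Nat.cast_nonneg n
    rcases le_total (g w) (-(n:ℝ)) with hc | hc
    · rw [max_eq_right hc, abs_neg, Nat.abs_cast]
      linarith [abs_nonneg (g w)]
    · rw [max_eq_left hc]
      linarith
  have htend : Tendsto (fun n => ∫ w, h n w ∂μ) atTop (𝓝 (∫ w, g w ∂μ)) := by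
    refine integral_tendsto_of_tendsto_of_antitone hint_h hint ?_ ?_
    · refine Eventually.of_forall fun w => fun m n hmn => ?_
      exact max_le_max le_rfl (neg_le_neg (by exact_mod_cast hmn))
    · refine Eventually.of_forall fun w => ?_
      have : ∀ᶠ n : ℕ in atTop, h n w = g w := by
        filter_upwards [eventually_ge_atTop ⌈-g w⌉₊] with n hn
        rw [hh]
        simp only
        rw [max_eq_left]
        have h1 : -g w ≤ (⌈-g w⌉₊ : ℝ) := Nat.le_ceil _
        have h2 : ((⌈-g w⌉₊:ℕ) : ℝ) ≤ (n : ℝ) := by exact_mod_cast hn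
        linarith
      exact Tendsto.congr' (this.mono fun n hn => hn.symm) tendsto_const_nhds
  have hneg : ∀ᶠ n : ℕ in atTop, ∫ w, h n w ∂μ < 0 := htend.eventually_lt_const hz
  obtain ⟨n, hn⟩ := hneg.exists
  refine ⟨(n : ℝ), Nat.cast_nonneg n, ?_⟩
  calc FM μ (n : ℝ) z ≤ ∫ w, h n w ∂μ :=
      integral_mono (integrable_fM hae (Nat.cast_nonneg n) hR z) (hint_h n)
        (fun w => fM_le_max _ z w)
    _ < 0 := hn

/-- Uniform negativity of a truncated potential on a compact set. -/
lemma uniform_M_neg {R : ℝ} (hae : ∀ᵐ w ∂μ, ‖w‖ ≤ R) (hR : 0 ≤ R)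
    {K : Set ℂ} (hK : IsCompact K) (hKneg : ∀ z ∈ K, logPot μ z < 0)
    (hint : ∀ z : ℂ, Integrable (fun w => Real.log (‖z - w‖)) μ) :
    ∃ M δ : ℝ, 0 ≤ M ∧ 0 < δ ∧ ∀ z ∈ K, FM μ M z ≤ -δ := by
  rcases K.eq_empty_or_nonempty with hKe | hKne
  · exact ⟨0, 1, le_rfl, one_pos, by simp [hKe]⟩
  have hMz : ∀ z : K, ∃ M : ℝ, 0 ≤ M ∧ FM μ M (z : ℂ) < 0 := fun z =>
    exists_M_neg hae hR z (hint z) (hKneg z z.2)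
  choose Mz hMz0 hMzneg using hMz
  set U : K → Set ℂ := fun i => {y | FM μ (Mz i) y < FM μ (Mz i) (i : ℂ) / 2} with hU
  have hUopen : ∀ i, IsOpen (U i) :=
    fun i => isOpen_lt (FM_continuous hae (hMz0 i) hR) continuous_const
  have hcover : K ⊆ ⋃ i, U i := by
    intro z hz
    exact Set.mem_iUnion.2 ⟨⟨z, hz⟩, by
      simp only [hU, Set.mem_setOf_eq]
      linarith [hMzneg ⟨z, hz⟩]⟩
  obtain ⟨t, ht⟩ := hK.elim_finite_subcover U hUopen hcover
  have htne : t.Nonempty := by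
    obtain ⟨z, hz⟩ := hKne
    obtain ⟨i, hi, _⟩ := Set.mem_iUnion₂.1 (ht hz)
    exact ⟨i, hi⟩
  set M : ℝ := t.sup' htne Mz with hM
  set δ : ℝ := t.inf' htne (fun i => -(FM μ (Mz i) (i : ℂ)) / 2) with hδ
  refine ⟨M, δ, ?_, ?_, ?_⟩
  · obtain ⟨i, hi⟩ := htne
    exact (hMz0 i).trans (Finset.le_sup' Mz hi)
  · rw [hδ, Finset.lt_inf'_iff]
    intro i _
    linarith [hMzneg i]
  · intro z hz
    obtain ⟨i, hit, hiU⟩ := Set.mem_iUnion₂.1 (ht hz)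
    have h1 : FM μ M z ≤ FM μ (Mz i) z :=
      FM_anti hae hR (hMz0 i) (Finset.le_sup' Mz hit) z
    have h2 : FM μ (Mz i) z < FM μ (Mz i) (i : ℂ) / 2 := hiU
    have h3 : δ ≤ -(FM μ (Mz i) (i : ℂ)) / 2 := Finset.inf'_le _ hit
    linarith

/-! ### Support facts -/

lemma isClosed_msupport (μ : Measure ℂ) : IsClosed (msupport μ) := by
  rw [← isOpen_compl_iff, isOpen_iff_mem_nhds]
  intro x hx
  simp only [msupport, Set.mem_compl_iff, Set.mem_setOf_eq, not_forall] at hx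
  obtain ⟨U, hU, hμU⟩ := hx
  have hμU0 : μ U = 0 := by
    by_contra h
    exact hμU (pos_iff_ne_zero.2 h)
  refine Filter.mem_of_superset (interior_mem_nhds.2 hU) fun y hy => ?_
  simp only [Set.mem_compl_iff, msupport, Set.mem_setOf_eq, not_forall]
  refine ⟨interior U, isOpen_interior.mem_nhds hy, ?_⟩
  simp [measure_mono_null interior_subset hμU0]

lemma msupport_ae (μ : Measure ℂ) : μ (msupport μ)ᶜ = 0 := by
  refine measure_null_of_locally_null _ fun x hx => ?_
  simp only [msupport, Set.mem_compl_iff, Set.mem_setOf_eq, not_forall] at hx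
  obtain ⟨U, hU, hμU⟩ := hx
  have hμU0 : μ U = 0 := by
    by_contra h
    exact hμU (pos_iff_ne_zero.2 h)
  exact ⟨U, nhdsWithin_le_nhds hU, hμU0⟩

/-! ### Inradius and liminf facts -/

lemma inradius_nonneg (U : Set ℂ) : 0 ≤ inradius U :=
  Real.sSup_nonneg fun _ hx => hx.1.le

lemma inradius_set_bddAbove {U : Set ℂ} {T : ℝ} (hT : 0 ≤ T) (hU : U ⊆ closedBall 0 T) :
    ∀ r ∈ {r : ℝ | 0 < r ∧ ∃ c : ℂ, Metric.ball c r ⊆ U}, r ≤ 4 * T := by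
  rintro r ⟨hr, c, hc⟩
  have hcU : c ∈ closedBall (0:ℂ) T := hU (hc (mem_ball_self hr))
  have hp : c + (r/2 : ℝ) ∈ closedBall (0:ℂ) T := by
    refine hU (hc ?_)
    rw [mem_ball, Complex.dist_eq]
    simp only [add_sub_cancel_left]
    rw [Complex.norm_real, Real.norm_eq_abs, abs_of_pos (by linarith)]
    linarith
  rw [mem_closedBall, Complex.dist_eq, sub_zero] at hcU hp
  have h1 : (r/2 : ℝ) ≤ ‖c + (r/2:ℝ)‖ + ‖c‖ := by
    have h2 := norm_sub_le (c + ((r/2:ℝ):ℂ)) c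
    simp only [add_sub_cancel_left] at h2
    rw [Complex.norm_real, Real.norm_eq_abs, abs_of_pos (by linarith : (0:ℝ) < r/2)] at h2
    exact h2
  linarith

lemma le_liminf_of_eventually {f : ℕ → ℝ} {q C : ℝ}
    (hb : ∀ᶠ n in atTop, f n ≤ C) (h : ∀ᶠ n in atTop, q ≤ f n) :
    q ≤ Filter.liminf f atTop := by
  rw [Filter.liminf_eq]
  refine le_csSup ⟨C, ?_⟩ h
  rintro a ha
  obtain ⟨n, hn1, hn2⟩ := (ha.and hb).exists
  exact hn1.trans hn2

lemma liminf_nonneg {f : ℕ → ℝ} (h : ∀ n, 0 ≤ f n) : 0 ≤ Filter.liminf f atTop := by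
  rw [Filter.liminf_eq]
  by_cases hb : BddAbove {a : ℝ | ∀ᶠ n in atTop, a ≤ f n}
  · exact le_csSup hb (Eventually.of_forall h)
  · rw [Real.sSup_of_not_bddAbove hb]

end St3

open St3 in
theorem statement3
    {Ω : Type*} [MeasurableSpace Ω] (P : Measure Ω) [IsProbabilityMeasure P]
    (μ : Measure ℂ) [IsProbabilityMeasure μ] (hS : IsCompact (msupport μ))
    (hA : AssumptionA μ)
    (X : ℕ → Ω → ℂ) (hmeas : ∀ i, Measurable (X i))
    (hid : ∀ i, Measure.map (X i) P = μ)
    (hindep : iIndepFun X P)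
    (hneg : Set.Nonempty {z : ℂ | logPot μ z < 0}) :
    ∀ᵐ ω ∂P, inradius {z : ℂ | logPot μ z < 0} ≤
      Filter.liminf (fun n : ℕ => inradius (lemniscate X n ω)) atTop := by
  classical
  -- Bound on the support
  obtain ⟨R, hR0, hSR⟩ : ∃ R : ℝ, 0 ≤ R ∧ msupport μ ⊆ closedBall 0 R := by
    obtain ⟨R, hR⟩ := hS.isBounded.subset_closedBall 0
    exact ⟨max R 0, le_max_right _ _,
      hR.trans (closedBall_subset_closedBall (le_max_left _ _))⟩
  have hae : ∀ᵐ w ∂μ, ‖w‖ ≤ R := by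
    rw [ae_iff]
    refine measure_mono_null ?_ (msupport_ae μ)
    intro w hw
    simp only [Set.mem_setOf_eq, not_le] at hw
    intro hwS
    have := hSR hwS
    rw [mem_closedBall, Complex.dist_eq, sub_zero] at this
    linarith
  have hint : ∀ z : ℂ, Integrable (fun w => Real.log (‖z - w‖)) μ :=
    integrable_log_of_A hA
  set Ωm : Set ℂ := {z : ℂ | logPot μ z < 0} with hΩm
  set A : Set ℝ := {r : ℝ | 0 < r ∧ ∃ c : ℂ, Metric.ball c r ⊆ Ωm} with hA'
  -- Ω⁻ is bounded
  have hΩb : Ωm ⊆ closedBall 0 (R + 1) := by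
    intro z hz
    by_contra hzc
    rw [mem_closedBall, Complex.dist_eq, sub_zero, not_le] at hzc
    have h0 : 0 ≤ logPot μ z := by
      refine integral_nonneg_of_ae ?_
      filter_upwards [hae] with w hw
      refine Real.log_nonneg ?_
      have h1 : ‖z‖ - ‖w‖ ≤ ‖z - w‖ :=
        le_trans (le_abs_self _) (abs_norm_sub_norm_le z w)
      linarith
    have hz' : logPot μ z < 0 := hz
    linarith
  -- the event that all samples lie in the support
  have hE0 : ∀ᵐ ω ∂P, ∀ k, X k ω ∈ msupport μ := by
    rw [ae_all_iff]
    intro k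
    rw [ae_iff]
    have h1 : P (X k ⁻¹' (msupport μ)ᶜ) = 0 := by
      rw [← Measure.map_apply (hmeas k) (isClosed_msupport μ).measurableSet.compl, hid k]
      exact msupport_ae μ
    exact h1
  -- the key statement, for a fixed radius
  have key : ∀ q : ℚ, 0 < (q:ℝ) → (∃ c : ℂ, closedBall c (q:ℝ) ⊆ Ωm) →
      ∀ᵐ ω ∂P, (q:ℝ) ≤ Filter.liminf (fun n : ℕ => inradius (lemniscate X n ω)) atTop := by
    rintro q hq ⟨c, hKsub⟩
    set K : Set ℂ := closedBall c (q:ℝ) with hKdef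
    have hK : IsCompact K := isCompact_closedBall c _
    have hKneg : ∀ z ∈ K, logPot μ z < 0 := fun z hz => hKsub hz
    obtain ⟨M, δ, hM0, hδ0, hMδ⟩ := uniform_M_neg hae hR0 hK hKneg hint
    set η : ℝ := δ/4 * Real.exp (-M) with hηdef
    have hη0 : 0 < η := by positivity
    obtain ⟨t, htK, htfin, htcov⟩ := hK.finite_cover_balls hη0
    -- strong law at each net point
    have hslln : ∀ y ∈ t, ∀ᵐ ω ∂P,
        Tendsto (fun n : ℕ => (∑ i ∈ Finset.range n, fM M y (X i ω)) / n) atTop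
          (𝓝 (FM μ M y)) := by
      intro y _
      have hmeasf : Measurable (fM M y) := (fM_continuous M y).measurable
      have hident : ∀ i, IdentDistrib (fun ω => fM M y (X i ω)) (fun ω => fM M y (X 0 ω)) P P := by
        intro i
        have hXid : IdentDistrib (X i) (X 0) P P :=
          ⟨(hmeas i).aemeasurable, (hmeas 0).aemeasurable, by rw [hid i, hid 0]⟩
        exact hXid.comp hmeasf
      have hindep' : Pairwise (Function.onFun (IndepFun · · P) (fun i ω => fM M y (X i ω))) :=
        fun i j hij => (hindep.indepFun hij).comp hmeasf hmeasf
      have hint0 : Integrable (fun ω => fM M y (X 0 ω)) P := by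
        have h1 : Integrable (fM M y) (Measure.map (X 0) P) := by
          rw [hid 0]; exact integrable_fM hae hM0 hR0 y
        exact (integrable_map_measure (fM_continuous M y).aestronglyMeasurable
          (hmeas 0).aemeasurable).1 h1
      have hmean : FM μ M y = ∫ ω, fM M y (X 0 ω) ∂P := by
        rw [FM, ← hid 0,
          integral_map (hmeas 0).aemeasurable (fM_continuous M y).aestronglyMeasurable]
      have h2 := strong_law_ae_real _ hint0 hindep' hident
      rw [← hmean] at h2
      exact h2
    have hslln_all : ∀ᵐ ω ∂P, ∀ y ∈ t,
        Tendsto (fun n : ℕ => (∑ i ∈ Finset.range n, fM M y (X i ω)) / n) atTop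
          (𝓝 (FM μ M y)) := (ae_ball_iff htfin.countable).2 hslln
    filter_upwards [hslln_all, hE0] with ω hω1 hω2
    -- lemniscates stay in a fixed ball
    have hlem_bdd : ∀ n : ℕ, 1 ≤ n → lemniscate X n ω ⊆ closedBall 0 (R+1) := by
      intro n hn z hz
      by_contra hzc
      rw [mem_closedBall, Complex.dist_eq, sub_zero, not_le] at hzc
      have hall : ∀ k ∈ Finset.range n, (1:ℝ) ≤ ‖z - X k ω‖ := by
        intro k _
        have hXk : ‖X k ω‖ ≤ R := by
          have := hSR (hω2 k)
          rwa [mem_closedBall, Complex.dist_eq, sub_zero] at this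
        have habs : ‖z‖ - ‖X k ω‖ ≤ ‖z - X k ω‖ :=
          le_trans (le_abs_self _) (abs_norm_sub_norm_le z (X k ω))
        linarith
      have h1 : (1:ℝ) ≤ ‖∏ k ∈ Finset.range n, (z - X k ω)‖ := by
        rw [Complex.norm_prod]
        calc (1:ℝ) = ∏ _k ∈ Finset.range n, (1:ℝ) := by rw [Finset.prod_const_one]
          _ ≤ ∏ k ∈ Finset.range n, ‖z - X k ω‖ :=
              Finset.prod_le_prod (fun i _ => zero_le_one) hall
      have hz' : ‖∏ k ∈ Finset.range n, (z - X k ω)‖ < 1 := hz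
      linarith
    -- eventual bounds at the net points
    have hev : ∀ᶠ n : ℕ in atTop, ∀ y ∈ t,
        (∑ i ∈ Finset.range n, fM M y (X i ω)) / n < -(3*δ/4) := by
      rw [eventually_all_finite htfin]
      intro y hy
      exact (hω1 y hy).eventually_lt_const (by linarith [hMδ y (htK hy)])
    -- eventually the ball is inside the lemniscate
    have hball : ∀ᶠ n : ℕ in atTop, Metric.ball c (q:ℝ) ⊆ lemniscate X n ω := by
      filter_upwards [hev, eventually_ge_atTop 1] with n hn hn1
      intro z hz
      have hzK : z ∈ K := ball_subset_closedBall hz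
      obtain ⟨y, hyt, hzy⟩ := Set.mem_iUnion₂.1 (htcov hzK)
      have hnpos : (0:ℝ) < n := by exact_mod_cast hn1
      have hexp1 : Real.exp M * Real.exp (-M) = 1 := by
        rw [← Real.exp_add, add_neg_cancel, Real.exp_zero]
      have hterm : ∀ i ∈ Finset.range n, fM M z (X i ω) ≤ fM M y (X i ω) + δ/4 := by
        intro i _
        have h1 := (abs_le.1 (fM_lip M z y (X i ω))).2
        have h2 : ‖z - y‖ < η := by rwa [mem_ball, Complex.dist_eq] at hzy
        have h3 : Real.exp M * ‖z - y‖ ≤ Real.exp M * η :=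
          mul_le_mul_of_nonneg_left h2.le (Real.exp_pos M).le
        have h4 : Real.exp M * η = δ/4 := by
          rw [hηdef, show Real.exp M * (δ/4 * Real.exp (-M)) = δ/4 * (Real.exp M * Real.exp (-M)) by ring, hexp1, mul_one]
        linarith
      have hsum : ∑ i ∈ Finset.range n, fM M z (X i ω)
          ≤ (∑ i ∈ Finset.range n, fM M y (X i ω)) + n * (δ/4) := by
        calc ∑ i ∈ Finset.range n, fM M z (X i ω)
            ≤ ∑ i ∈ Finset.range n, (fM M y (X i ω) + δ/4) := Finset.sum_le_sum hterm
          _ = (∑ i ∈ Finset.range n, fM M y (X i ω)) + n * (δ/4) := by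
              rw [Finset.sum_add_distrib, Finset.sum_const, Finset.card_range, nsmul_eq_mul]
      have hy_sum : ∑ i ∈ Finset.range n, fM M y (X i ω) < n * (-(3*δ/4)) := by
        have := hn y hyt
        rw [div_lt_iff₀ hnpos] at this
        linarith
      have hfinal : ∑ i ∈ Finset.range n, fM M z (X i ω) < -(n * (δ/2)) := by
        calc ∑ i ∈ Finset.range n, fM M z (X i ω)
            ≤ (∑ i ∈ Finset.range n, fM M y (X i ω)) + n * (δ/4) := hsum
          _ < n * (-(3*δ/4)) + n * (δ/4) := by linarith
          _ = -(n * (δ/2)) := by ring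
      show ‖∏ k ∈ Finset.range n, (z - X k ω)‖ < 1
      have hprod := prod_le_exp_sum M z n (fun k => X k ω)
      have hexp : Real.exp (∑ k ∈ Finset.range n, fM M z (X k ω)) < 1 := by
        rw [Real.exp_lt_one_iff]
        have h5 : 0 < n * (δ/2) := by positivity
        linarith
      exact lt_of_le_of_lt hprod hexp
    -- conclude
    have hq_le : ∀ᶠ n : ℕ in atTop, (q:ℝ) ≤ inradius (lemniscate X n ω) := by
      filter_upwards [hball, eventually_ge_atTop 1] with n hn hn1
      refine le_csSup ⟨4*(R+1), fun r hr =>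
        inradius_set_bddAbove (by linarith) (hlem_bdd n hn1) r hr⟩ ⟨hq, c, hn⟩
    have hub : ∀ᶠ n : ℕ in atTop, inradius (lemniscate X n ω) ≤ 4*(R+1) := by
      filter_upwards [eventually_ge_atTop 1] with n hn1
      exact Real.sSup_le (fun r hr =>
        inradius_set_bddAbove (by linarith) (hlem_bdd n hn1) r hr) (by linarith)
    exact le_liminf_of_eventually hub hq_le
  -- combine over all rationals
  have hall : ∀ᵐ ω ∂P, ∀ q : ℚ, 0 < (q:ℝ) → (∃ c : ℂ, closedBall c (q:ℝ) ⊆ Ωm) →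
      (q:ℝ) ≤ Filter.liminf (fun n : ℕ => inradius (lemniscate X n ω)) atTop := by
    rw [ae_all_iff]
    intro q
    by_cases h1 : 0 < (q:ℝ)
    · by_cases h2 : ∃ c : ℂ, closedBall c (q:ℝ) ⊆ Ωm
      · filter_upwards [key q h1 h2] with ω hω _ _
        exact hω
      · exact Eventually.of_forall fun ω _ h2' => absurd h2' h2
    · exact Eventually.of_forall fun ω h1' => absurd h1' h1
  filter_upwards [hall] with ω hω
  set L : ℝ := Filter.liminf (fun n : ℕ => inradius (lemniscate X n ω)) atTop with hL
  have hL0 : 0 ≤ L := liminf_nonneg fun n => inradius_nonneg _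
  show sSup A ≤ L
  by_contra hcon
  push_neg at hcon
  have hpos : 0 < sSup A := lt_of_le_of_lt hL0 hcon
  have hAne : A.Nonempty := by
    by_contra hAe
    rw [Set.not_nonempty_iff_eq_empty] at hAe
    rw [hAe, Real.sSup_empty] at hpos
    exact lt_irrefl 0 hpos
  obtain ⟨q, hq1, hq2⟩ := exists_rat_btwn hcon
  have hq0 : 0 < (q:ℝ) := lt_of_le_of_lt hL0 hq1
  obtain ⟨r, hrA, hqr⟩ := exists_lt_of_lt_csSup hAne hq2
  obtain ⟨c, hc⟩ := hrA.2
  have hcb : closedBall c (q:ℝ) ⊆ Ωm := le_trans (closedBall_subset_ball hqr) hc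
  exact absurd (hω q hq0 ⟨c, hcb⟩) (not_le.2 hq1)
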